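/- For every CSL-distance minspace model I = (Δ, d, ·^I) there exists a CSL-preferential model J on the same set Δ that is equivalent to I, i.e. A^I = A^J for every L_CSL-formula A. (In fact the model defined by x ≺_w y iff d(w,x) < d(w,y), with the same valuation of propositional variables, works: each ≺_w is modular, centered, satisfies the Limit Assumption, and the two models agree on all formulas.) -/

import Mathlib

/-- Formulas of the language L_CSL: propositional variables, ⊥, negation,
conjunction, and the comparative similarity connective `cls` (A ⇇ B). -/
inductive CSLForm : Type
  | var : ℕ → CSLForm
  | bot : CSLForm
  | neg : CSLForm → CSLForm
  | and : CSLForm → CSLForm → CSLForm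
  | cls : CSLForm → CSLForm → CSLForm

namespace CSLForm

def top : CSLForm := neg bot
def or (A B : CSLForm) : CSLForm := neg (and (neg A) (neg B))
def imp (A B : CSLForm) : CSLForm := or (neg A) B

end CSLForm

/-- A boolean valuation respecting the classical connectives
(⇇-formulas and variables are treated as atoms). -/
def IsBoolVal (v : CSLForm → Bool) : Prop :=
  v .bot = false ∧ (∀ A, v (.neg A) = !v A) ∧ (∀ A B, v (.and A B) = (v A && v B))

/-- Classical tautologies of L_CSL. -/
def CSLTautology (A : CSLForm) : Prop := ∀ v, IsBoolVal v → v A = true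

/-- The Hilbert system CSMS. -/
inductive CSMS : CSLForm → Prop
  | taut {A : CSLForm} : CSLTautology A → CSMS A
  | mp {A B : CSLForm} : CSMS (A.imp B) → CSMS A → CSMS B
  | mon {A B : CSLForm} (C : CSLForm) : CSMS (A.imp B) → CSMS ((A.cls C).imp (B.cls C))
  | ax1 (A B : CSLForm) : CSMS ((A.cls B).neg.or (B.cls A).neg)
  | ax2 (A B C : CSLForm) : CSMS ((A.cls B).imp ((A.cls C).or (C.cls B)))
  | ax3 (A B : CSLForm) : CSMS ((A.and B.neg).imp (A.cls B))
  | ax4 (A B : CSLForm) : CSMS ((A.cls B).imp B.neg)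
  | ax5 (A B C : CSLForm) : CSMS (((A.cls B).and (A.cls C)).imp (A.cls (B.or C)))
  | ax6 (A : CSLForm) : CSMS ((A.cls .bot).imp (((A.cls .bot).neg.cls .bot).neg))

/-- Semantic extension of a formula, given preferential relations
`pref w x y` (meaning x ≺_w y) and a valuation of propositional variables. -/
def prefEval {W : Type} (pref : W → W → W → Prop) (val : ℕ → Set W) :
    CSLForm → Set W
  | .var i => val i
  | .bot => ∅
  | .neg A => (prefEval pref val A)ᶜ
  | .and A B => prefEval pref val A ∩ prefEval pref val B
  | .cls A B =>
      {w | ∃ x ∈ prefEval pref val A, ∀ y ∈ prefEval pref val B, pref w x y}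

/-- A CSL-preferential model. -/
structure CSLPrefModel (W : Type) where
  ne : Nonempty W
  pref : W → W → W → Prop
  modular : ∀ w x y z, pref w x y → pref w z y ∨ pref w x z
  centered : ∀ w x, x = w ∨ pref w w x
  limit : ∀ w (X : Set W), X.Nonempty → {y ∈ X | ∀ z, pref w z y → z ∉ X}.Nonempty
  val : ℕ → Set W

def CSLPrefModel.eval {W : Type} (M : CSLPrefModel W) : CSLForm → Set W :=
  prefEval M.pref M.val

/-- Distance from a point to a set, in ℝ≥0∞ (so that it is ∞ on the empty set). -/
noncomputable def setDist {W : Type} (d : W → W → ℝ) (w : W) (X : Set W) : ENNReal :=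
  ⨅ x ∈ X, ENNReal.ofReal (d w x)

/-- A CSL-distance minspace model. -/
structure CSLMinModel (W : Type) where
  ne : Nonempty W
  dist : W → W → ℝ
  dist_nonneg : ∀ x y, 0 ≤ dist x y
  dist_eq_zero : ∀ x y, dist x y = 0 ↔ x = y
  min_attained : ∀ (w : W) (X : Set W), X.Nonempty → ∃ x ∈ X, ∀ y ∈ X, dist w x ≤ dist w y
  val : ℕ → Set W

noncomputable def CSLMinModel.eval {W : Type} (M : CSLMinModel W) : CSLForm → Set W
  | .var i => M.val i
  | .bot => ∅
  | .neg A => (M.eval A)ᶜ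
  | .and A B => M.eval A ∩ M.eval B
  | .cls A B => {w | setDist M.dist w (M.eval A) < setDist M.dist w (M.eval B)}

/-- Iterated disjunction of a list of formulas. -/
def bigOr : List CSLForm → CSLForm
  | [] => .bot
  | [A] => A
  | A :: B :: rest => A.or (bigOr (B :: rest))

/-- Iterated conjunction of a list of formulas. -/
def bigAnd : List CSLForm → CSLForm
  | [] => .top
  | [A] => A
  | A :: B :: rest => A.and (bigAnd (B :: rest))

/-- Γ is inconsistent wrt CSMS: there are A₁,…,Aₙ ∈ Γ (n ≥ 1) with ⊢ ¬A₁ ⊔ … ⊔ ¬Aₙ. -/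
def Inconsistent (Γ : Set CSLForm) : Prop :=
  ∃ L : List CSLForm, L ≠ [] ∧ (∀ A ∈ L, A ∈ Γ) ∧ CSMS (bigOr (L.map .neg))

def Consistent (Γ : Set CSLForm) : Prop := ¬ Inconsistent Γ

def MaxConsistent (Γ : Set CSLForm) : Prop :=
  Consistent Γ ∧ ∀ A, A ∉ Γ → Inconsistent (insert A Γ)

/-- w^A = {¬B | (A ⇇ B) ∈ w}. -/
def projSet (w : Set CSLForm) (A : CSLForm) : Set CSLForm :=
  {F | ∃ B, F = CSLForm.neg B ∧ (A.cls B) ∈ w}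

/-- R(x,y) iff every A ∈ y satisfies (A ⇇ ⊥) ∈ x. -/
def Rrel (x y : Set CSLForm) : Prop := ∀ A, A ∈ y → (A.cls .bot) ∈ x

/-- The canonical preferential relation: x ≺_w y iff
∃ B ∈ y such that ∀ A ∈ x, (A ⇇ B) ∈ w. -/
def canonPrec (w x y : Set CSLForm) : Prop :=
  ∃ B, B ∈ y ∧ ∀ A, A ∈ x → (A.cls B) ∈ w


lemma setDist_min {W : Type} (d : W → W → ℝ) (w x₀ : W) (X : Set W)
    (hx₀ : x₀ ∈ X) (hmin : ∀ y ∈ X, d w x₀ ≤ d w y) :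
    setDist d w X = ENNReal.ofReal (d w x₀) := by
  apply le_antisymm
  · exact biInf_le _ hx₀
  · exact le_iInf₂ fun y hy => ENNReal.ofReal_le_ofReal (hmin y hy)

lemma setDist_empty {W : Type} (d : W → W → ℝ) (w : W) :
    setDist d w (∅ : Set W) = ⊤ := by simp [setDist]

/-- every CSL-distance minspace model has an equivalent
CSL-preferential model on the same set; in fact the one given by
x ≺_w y iff d(w,x) < d(w,y), with the same valuation, works. -/
theorem minspace_to_preferential {W : Type} (I : CSLMinModel W) :
    ∃ J : CSLPrefModel W,
      (∀ w x y : W, J.pref w x y ↔ I.dist w x < I.dist w y) ∧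
      (∀ i : ℕ, J.val i = I.val i) ∧
      (∀ A : CSLForm, J.eval A = I.eval A) := by
  refine ⟨{ ne := I.ne
            pref := fun w x y => I.dist w x < I.dist w y
            modular := fun w x y z h => by
              rcases lt_or_ge (I.dist w z) (I.dist w y) with h1 | h1
              · exact Or.inl h1
              · exact Or.inr (lt_of_lt_of_le h h1)
            centered := fun w x => by
              rcases eq_or_ne x w with h | h
              · exact Or.inl h
              · refine Or.inr ?_
                have h0 : I.dist w w = 0 := (I.dist_eq_zero w w).2 rfl
                have h1 : I.dist w x ≠ 0 := fun hc => h ((I.dist_eq_zero w x).1 hc).symm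
                have := I.dist_nonneg w x
                show I.dist w w < I.dist w x
                rw [h0]
                exact lt_of_le_of_ne this (Ne.symm h1)
            limit := fun w X hX => by
              obtain ⟨x, hxX, hmin⟩ := I.min_attained w X hX
              exact ⟨x, hxX, fun z hz hzX => absurd (hmin z hzX) (not_le.2 hz)⟩
            val := I.val }, fun w x y => Iff.rfl, fun i => rfl, ?_⟩
  intro A
  induction A with
  | var i => rfl
  | bot => rfl
  | neg A ih => simp only [CSLPrefModel.eval, prefEval, CSLMinModel.eval] at *; rw [ih]
  | and A B ihA ihB =>
      simp only [CSLPrefModel.eval, prefEval, CSLMinModel.eval] at *; rw [ihA, ihB]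
  | cls A B ihA ihB =>
      simp only [CSLPrefModel.eval, prefEval, CSLMinModel.eval] at *
      rw [ihA, ihB]
      ext w
      simp only [Set.mem_setOf_eq]
      rcases (I.eval A).eq_empty_or_nonempty with hA | hA
      · simp [hA, setDist_empty]
      · obtain ⟨x₀, hx₀, hminA⟩ := I.min_attained w _ hA
        rw [setDist_min I.dist w x₀ _ hx₀ hminA]
        rcases (I.eval B).eq_empty_or_nonempty with hB | hB
        · simp only [hB, setDist_empty]
          constructor
          · intro _; exact ENNReal.ofReal_lt_top
          · intro _; exact ⟨x₀, hx₀, fun y hy => absurd hy (Set.notMem_empty y)⟩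
        · obtain ⟨y₀, hy₀, hminB⟩ := I.min_attained w _ hB
          rw [setDist_min I.dist w y₀ _ hy₀ hminB]
          rw [ENNReal.ofReal_lt_ofReal_iff_of_nonneg (I.dist_nonneg w x₀)]
          constructor
          · rintro ⟨x, hx, hlt⟩
            exact lt_of_le_of_lt (hminA x hx) (hlt y₀ hy₀)
          · intro h
            exact ⟨x₀, hx₀, fun y hy => lt_of_lt_of_le h (hminB y hy)⟩
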